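/- Let H be a real Hilbert space, ℓ : H → ℝ a linear map, s ∈ H, n ≥ 1 an integer, λ > 0, and M a collection of finite-dimensional subspaces of H. Assume that for all m, m' ∈ M, ‖w_{m+m'}‖² ≤ λ (D_m + D_{m'}), where m+m' is the subspace spanned by m ∪ m'. Let γ ∈ (0,1). Suppose m̂ ∈ M minimizes −‖ŝ_m‖² + (λ/n)·D_m over m ∈ M. Then for every m₀ ∈ M: (λ/n)·(D_{m̂} − D_{m₀}) ≤ (1−γ)^{−1} [ (2/γ + 1)·‖ŝ_{m₀} − s‖² + (2/γ − 1)·‖ŝ_{m̂} − s‖² + 2γ·(λ/n)·D_{m₀} ]. -/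

import Mathlib

open scoped RealInnerProductSpace

set_option maxHeartbeats 2000000 in
/-- the pathwise inequality on the dimensions of the selected model,
valid on the event where the noise projections are controlled. -/
theorem stmt_1 {H : Type*} [NormedAddCommGroup H] [InnerProductSpace ℝ H]
    (ℓ : H →ₗ[ℝ] ℝ) (s : H) (n : ℕ) (hn : 1 ≤ n) (lam : ℝ) (hlam : 0 < lam)
    (M : Set (Submodule ℝ H)) (hfin : ∀ m ∈ M, FiniteDimensional ℝ m)
    -- `proj V` is the orthogonal projection of `s` onto `V`
    (proj : Submodule ℝ H → H)
    (hproj : ∀ V : Submodule ℝ H, FiniteDimensional ℝ V →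
      proj V ∈ V ∧ s - proj V ∈ Vᗮ)
    -- `w V` is the unique vector of `V` representing `ℓ` on `V`
    (w : Submodule ℝ H → H)
    (hw : ∀ V : Submodule ℝ H, FiniteDimensional ℝ V →
      w V ∈ V ∧ ∀ x ∈ V, ⟪w V, x⟫ = ℓ x)
    -- control of the noise on sums of pairs of models
    (hnoise : ∀ m ∈ M, ∀ m' ∈ M,
      ‖w (m ⊔ m')‖ ^ 2 ≤
        lam * ((Module.finrank ℝ m : ℝ) + (Module.finrank ℝ m' : ℝ)))
    (γ : ℝ) (hγ0 : 0 < γ) (hγ1 : γ < 1)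
    -- the least-squares estimators
    (shat : Submodule ℝ H → H)
    (hshat : ∀ m : Submodule ℝ H, shat m = proj m + ((n : ℝ) ^ (-(1 / 2 : ℝ))) • w m)
    -- `mhat` minimizes the penalized criterion
    (mhat : Submodule ℝ H) (hmhat : mhat ∈ M)
    (hminhat : ∀ m ∈ M,
      -‖shat mhat‖ ^ 2 + lam / n * (Module.finrank ℝ mhat : ℝ) ≤
        -‖shat m‖ ^ 2 + lam / n * (Module.finrank ℝ m : ℝ))
    (m₀ : Submodule ℝ H) (hm₀ : m₀ ∈ M) :
    lam / n * ((Module.finrank ℝ mhat : ℝ) - (Module.finrank ℝ m₀ : ℝ)) ≤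
      (1 - γ)⁻¹ * ((2 / γ + 1) * ‖shat m₀ - s‖ ^ 2 +
        (2 / γ - 1) * ‖shat mhat - s‖ ^ 2 +
        2 * γ * (lam / n) * (Module.finrank ℝ m₀ : ℝ)) := by
  haveI h1 : FiniteDimensional ℝ mhat := hfin mhat hmhat
  haveI h2 : FiniteDimensional ℝ m₀ := hfin m₀ hm₀
  set V : Submodule ℝ H := mhat ⊔ m₀ with hVdef
  haveI hVfd : FiniteDimensional ℝ V := inferInstance
  set ε : ℝ := (n : ℝ) ^ (-(1 / 2 : ℝ)) with hεdef
  have hn0 : (0:ℝ) < n := by positivity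
  have hε : 0 < ε := Real.rpow_pos_of_pos hn0 _
  have hε2 : ε ^ 2 = ((n:ℝ))⁻¹ := by
    rw [hεdef, ← Real.rpow_natCast ((n:ℝ) ^ (-(1/2:ℝ))) 2, ← Real.rpow_mul hn0.le]
    norm_num [Real.rpow_neg_one]
  obtain ⟨hwV, hwVrep⟩ := hw V hVfd
  -- generic facts about a model m ≤ V
  have key : ∀ m : Submodule ℝ H, ∀ _ : FiniteDimensional ℝ m, m ≤ V →
      ‖shat m‖ ^ 2 = ‖s‖ ^ 2 - ‖s - proj m‖ ^ 2 + 2 * ε * ⟪proj m, w V⟫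
          + ε ^ 2 * ‖w m‖ ^ 2 ∧
      ‖shat m - s‖ ^ 2 = ‖s - proj m‖ ^ 2 + ε ^ 2 * ‖w m‖ ^ 2 := by
    intro m hm hmV
    obtain ⟨hpmem, hporth⟩ := hproj m hm
    obtain ⟨hwm, hwmrep⟩ := hw m hm
    have horth : ∀ x ∈ m, ⟪x, s - proj m⟫ = 0 := fun x hx =>
      (Submodule.mem_orthogonal m (s - proj m)).1 hporth x hx
    have hpy : ‖s‖ ^ 2 = ‖proj m‖ ^ 2 + ‖s - proj m‖ ^ 2 := by
      have hs : s = proj m + (s - proj m) := by abel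
      calc ‖s‖ ^ 2 = ‖proj m + (s - proj m)‖ ^ 2 := by rw [← hs]
        _ = ‖proj m‖ ^ 2 + 2 * ⟪proj m, s - proj m⟫ + ‖s - proj m‖ ^ 2 :=
          norm_add_sq_real _ _
        _ = ‖proj m‖ ^ 2 + ‖s - proj m‖ ^ 2 := by rw [horth _ hpmem]; ring
    have hwag : ⟪proj m, w m⟫ = ⟪proj m, w V⟫ := by
      rw [real_inner_comm, hwmrep _ hpmem, real_inner_comm, hwVrep _ (hmV hpmem)]
    have hsm : ‖shat m‖ ^ 2 = ‖proj m‖ ^ 2 + 2 * ε * ⟪proj m, w V⟫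
        + ε ^ 2 * ‖w m‖ ^ 2 := by
      rw [hshat m, norm_add_sq_real, real_inner_smul_right, hwag, norm_smul,
        mul_pow, Real.norm_eq_abs, sq_abs]
      ring
    constructor
    · rw [hsm]; linarith [hpy]
    · have hd : shat m - s = (ε • w m) - (s - proj m) := by
        rw [hshat m]; abel
      rw [hd, norm_sub_sq_real, real_inner_smul_left, horth _ hwm, norm_smul,
        mul_pow, Real.norm_eq_abs, sq_abs]
      ring
  obtain ⟨hEh, hBh⟩ := key mhat h1 le_sup_left
  obtain ⟨hE0, hB0⟩ := key m₀ h2 le_sup_right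
  obtain ⟨hph, -⟩ := hproj mhat h1
  obtain ⟨hp0, -⟩ := hproj m₀ h2
  have hmin := hminhat m₀ hm₀
  have hnz := hnoise mhat hmhat m₀ hm₀
  -- abbreviations
  set dh : ℝ := ‖s - proj mhat‖
  set d0 : ℝ := ‖s - proj m₀‖
  set χh : ℝ := ‖w mhat‖
  set χ0 : ℝ := ‖w m₀‖
  set χV : ℝ := ‖w V‖
  set Dh : ℝ := (Module.finrank ℝ mhat : ℝ)
  set D0 : ℝ := (Module.finrank ℝ m₀ : ℝ)
  set L : ℝ := lam / n
  -- Cauchy-Schwarz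
  have hCS : ⟪proj mhat - proj m₀, w V⟫ ≤ (dh + d0) * χV := by
    calc ⟪proj mhat - proj m₀, w V⟫ ≤ ‖proj mhat - proj m₀‖ * χV :=
          real_inner_le_norm _ _
      _ ≤ (dh + d0) * χV := by
          apply mul_le_mul_of_nonneg_right _ (norm_nonneg _)
          have : proj mhat - proj m₀ = (s - proj m₀) - (s - proj mhat) := by abel
          rw [this]
          calc ‖(s - proj m₀) - (s - proj mhat)‖ ≤ d0 + dh := norm_sub_le _ _
            _ = dh + d0 := by ring
  have hsplit : ⟪proj mhat - proj m₀, w V⟫ = ⟪proj mhat, w V⟫ - ⟪proj m₀, w V⟫ :=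
    inner_sub_left _ _ _
  -- noise control
  have hF3 : ε ^ 2 * χV ^ 2 ≤ L * (Dh + D0) := by
    have h' : χV ^ 2 ≤ lam * (Dh + D0) := hnz
    rw [hε2, inv_mul_eq_div, div_le_iff₀ hn0]
    have e : L * (Dh + D0) * n = lam * (Dh + D0) := by
      simp only [L]; field_simp
    rw [e]; exact h'
  have hF3γ : γ * (ε ^ 2 * χV ^ 2) ≤ γ * (L * (Dh + D0)) :=
    mul_le_mul_of_nonneg_left hF3 hγ0.le
  -- minimality
  have hF1 : L * (Dh - D0) ≤ (d0 ^ 2 - dh ^ 2)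
      + 2 * ε * ⟪proj mhat - proj m₀, w V⟫ + ε ^ 2 * (χh ^ 2 - χ0 ^ 2) := by
    rw [hsplit]
    linarith [hmin, hEh, hE0]
  have hF2 : 2 * ε * ⟪proj mhat - proj m₀, w V⟫ ≤ 2 * ε * ((dh + d0) * χV) :=
    mul_le_mul_of_nonneg_left hCS (by positivity)
  -- AM-GM steps
  have am1 : 2 * (ε * (dh * χV)) ≤ 2 / γ * dh ^ 2 + γ / 2 * (ε ^ 2 * χV ^ 2) := by
    have h := sq_nonneg (2 * dh - γ * (ε * χV))
    have hmul : γ * (2 * (ε * (dh * χV))) ≤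
        γ * (2 / γ * dh ^ 2 + γ / 2 * (ε ^ 2 * χV ^ 2)) := by
      have e : γ * (2 / γ * dh ^ 2 + γ / 2 * (ε ^ 2 * χV ^ 2))
          = 2 * dh ^ 2 + γ ^ 2 / 2 * (ε ^ 2 * χV ^ 2) := by
        field_simp
      rw [e]; nlinarith [h]
    exact (mul_le_mul_iff_right₀ hγ0).1 hmul
  have am2 : 2 * (ε * (d0 * χV)) ≤ 2 / γ * d0 ^ 2 + γ / 2 * (ε ^ 2 * χV ^ 2) := by
    have h := sq_nonneg (2 * d0 - γ * (ε * χV))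
    have hmul : γ * (2 * (ε * (d0 * χV))) ≤
        γ * (2 / γ * d0 ^ 2 + γ / 2 * (ε ^ 2 * χV ^ 2)) := by
      have e : γ * (2 / γ * d0 ^ 2 + γ / 2 * (ε ^ 2 * χV ^ 2))
          = 2 * d0 ^ 2 + γ ^ 2 / 2 * (ε ^ 2 * χV ^ 2) := by
        field_simp
      rw [e]; nlinarith [h]
    exact (mul_le_mul_iff_right₀ hγ0).1 hmul
  -- main chain
  have Hmain : L * (Dh - D0) ≤ (1 + 2 / γ) * d0 ^ 2 + (2 / γ - 1) * dh ^ 2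
      + ε ^ 2 * χh ^ 2 - ε ^ 2 * χ0 ^ 2 + γ * (L * Dh) + γ * (L * D0) := by
    linarith [hF1, hF2, am1, am2, hF3γ]
  have hc2 : (2:ℝ) ≤ 2 / γ := by
    rw [le_div_iff₀ hγ0]; linarith
  have hA : (0:ℝ) ≤ (2 / γ - 2) * (ε ^ 2 * χh ^ 2) := by
    apply mul_nonneg (by linarith) (by positivity)
  have hB : (0:ℝ) ≤ (2 / γ + 2) * (ε ^ 2 * χ0 ^ 2) := by
    apply mul_nonneg (by linarith) (by positivity)
  have h1γ : (0:ℝ) < 1 - γ := by linarith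
  rw [inv_mul_eq_div, le_div_iff₀ h1γ, hBh, hB0]
  linarith [Hmain, hA, hB]
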